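/- Let k ≥ 3 and let D be a super-orientation of the complement of C_{2k+1}, with vertices labeled x_0,…,x_{2k} so that x_i and x_j are adjacent in the underlying graph if and only if j − i ≢ ±1 (mod 2k+1). Let D' be the digraph obtained from D by deleting the vertices x_0 and x_1 and deleting every arc between x_2 and x_{2k} (so D' is a super-orientation of the complement of C_{2k−1}). If D' has a path partition orthogonal to {x_2, x_{2k}}, then D has a path partition orthogonal to {x_0, x_{2k}}. -/

import Mathlib

/-- A directed path in a digraph with arc relation `A`: a nonempty list of distinct
vertices each of which dominates the next. -/
def IsDipath {V : Type*} (A : V → V → Prop) (p : List V) : Prop :=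
  p ≠ [] ∧ p.Nodup ∧ p.Chain' A

/-- A path partition of the digraph `(V, A)`: a collection of vertex-disjoint directed
paths covering all of `V`. -/
def IsPathPartition {V : Type*} (A : V → V → Prop) (P : Set (List V)) : Prop :=
  (∀ p ∈ P, IsDipath A p) ∧
  (∀ p ∈ P, ∀ q ∈ P, p ≠ q → ∀ v : V, v ∈ p → v ∉ q) ∧
  (∀ v : V, ∃ p ∈ P, v ∈ p)

/-- A path partition `P` and a stable set `S` are orthogonal if every path of `P`
contains exactly one vertex of `S`. -/
def OrthogonalPP {V : Type*} (P : Set (List V)) (S : Set V) : Prop :=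
  ∀ p ∈ P, ∃! v : V, v ∈ S ∧ v ∈ p

/-- A directed path of the subdigraph induced by the vertex set `W`. -/
def IsDipathOn {V : Type*} (A : V → V → Prop) (W : Set V) (p : List V) : Prop :=
  p ≠ [] ∧ p.Nodup ∧ (∀ v ∈ p, v ∈ W) ∧ p.Chain' A

/-- A path partition of the subdigraph induced by the vertex set `W`. -/
def IsPathPartitionOn {V : Type*} (A : V → V → Prop) (W : Set V) (P : Set (List V)) : Prop :=
  (∀ p ∈ P, IsDipathOn A W p) ∧
  (∀ p ∈ P, ∀ q ∈ P, p ≠ q → ∀ v : V, v ∈ p → v ∉ q) ∧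
  (∀ v ∈ W, ∃ p ∈ P, v ∈ p)

/-- A stable set: a set of pairwise non-adjacent vertices. -/
def IsStableSet {V : Type*} (A : V → V → Prop) (S : Set V) : Prop :=
  ∀ u ∈ S, ∀ v ∈ S, u ≠ v → ¬ A u v ∧ ¬ A v u

/-- A digraph is α-diperfect if for every induced subdigraph (on a vertex set `W`) and
every maximum stable set `S` of it, there is a path partition of it orthogonal to `S`. -/
def AlphaDiperfect {V : Type*} (A : V → V → Prop) : Prop :=
  ∀ (W S : Set V), S ⊆ W → IsStableSet A S →
    (∀ T ⊆ W, IsStableSet A T → T.ncard ≤ S.ncard) →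
    ∃ P : Set (List V), IsPathPartitionOn A W P ∧ OrthogonalPP P S

/-- A vertex adjacent to every vertex of a directed path can be inserted into it. -/
lemma insert_into_path {V : Type*} (A : V → V → Prop) (x : V) :
    ∀ q : List V, q.Nodup → q.Chain' A → x ∉ q → (∀ v ∈ q, A x v ∨ A v x) →
    ∃ r : List V, r.Nodup ∧ r.Chain' A ∧ (∀ v, v ∈ r ↔ v = x ∨ v ∈ q) ∧
      (∀ a, r.head? = some a → a = x ∨ q.head? = some a) := by
  intro q
  induction q with
  | nil =>
    intro _ _ _ _
    exact ⟨[x], by simp, List.isChain_singleton x, by simp, by simp⟩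
  | cons a t ih =>
    intro hnd hch hx hadj
    by_cases hxa : A x a
    · refine ⟨x :: a :: t, ?_, ?_, ?_, ?_⟩
      · exact List.nodup_cons.mpr ⟨hx, hnd⟩
      · exact List.isChain_cons.mpr ⟨by intro b hb; simp at hb; subst hb; exact hxa, hch⟩
      · intro v; simp [or_comm]
      · intro b hb; simp at hb; exact Or.inl hb.symm
    · have hax : A a x := (hadj a (by simp)).resolve_left hxa
      have hnd' : t.Nodup := (List.nodup_cons.mp hnd).2
      have hch' : t.Chain' A := hch.tail
      have hx' : x ∉ t := fun h => hx (List.mem_cons_of_mem _ h)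
      obtain ⟨r, hrnd, hrch, hrmem, hrhd⟩ := ih hnd' hch' hx'
        (fun v hv => hadj v (List.mem_cons_of_mem _ hv))
      have har : a ∉ r := by
        intro h
        rcases (hrmem a).mp h with h1 | h1
        · exact hx (h1 ▸ List.mem_cons_self (a := a) (l := t))
        · exact (List.nodup_cons.mp hnd).1 h1
      refine ⟨a :: r, List.nodup_cons.mpr ⟨har, hrnd⟩, ?_, ?_, ?_⟩
      · refine List.isChain_cons.mpr ⟨?_, hrch⟩
        intro b hb
        rcases hrhd b hb with h1 | h1
        · exact h1 ▸ hax
        · exact (List.isChain_cons.mp hch).1 b h1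
      · intro v
        constructor
        · intro hv
          rcases List.mem_cons.mp hv with h1 | h1
          · exact Or.inr (h1 ▸ List.mem_cons_self (a := a) (l := t))
          · rcases (hrmem v).mp h1 with h2 | h2
            · exact Or.inl h2
            · exact Or.inr (List.mem_cons_of_mem _ h2)
        · intro hv
          rcases hv with h1 | h1
          · exact List.mem_cons_of_mem _ ((hrmem v).mpr (Or.inl h1))
          · rcases List.mem_cons.mp h1 with h2 | h2
            · exact h2 ▸ List.mem_cons_self (a := a) (l := r)
            · exact List.mem_cons_of_mem _ ((hrmem v).mpr (Or.inr h2))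
      · intro b hb; simp at hb; exact Or.inr (by simp [hb])


/-- let `D` be a super-orientation of `(C_{2k+1})ᶜ`, `k ≥ 3`, and let `D'`
be obtained from `D` by deleting `x_0`, `x_1` and every arc between `x_2` and `x_{2k}`.
If `D'` has a path partition orthogonal to `{x_2, x_{2k}}`, then `D` has a path
partition orthogonal to `{x_0, x_{2k}}`. -/
theorem stmt_4 (k : ℕ) (hk : 3 ≤ k)
    (A : ZMod (2*k+1) → ZMod (2*k+1) → Prop)
    (hso : ∀ u v : ZMod (2*k+1),
      (A u v ∨ A v u) ↔ (u ≠ v ∧ v - u ≠ 1 ∧ u - v ≠ 1))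
    (h : ∃ P : Set (List (ZMod (2*k+1))),
      IsPathPartitionOn
        (fun u v => A u v ∧
          ¬((u = ((2 : ℕ) : ZMod (2*k+1)) ∧ v = ((2*k : ℕ) : ZMod (2*k+1))) ∨
            (u = ((2*k : ℕ) : ZMod (2*k+1)) ∧ v = ((2 : ℕ) : ZMod (2*k+1)))))
        {w : ZMod (2*k+1) | w ≠ ((0 : ℕ) : ZMod (2*k+1)) ∧ w ≠ ((1 : ℕ) : ZMod (2*k+1))}
        P ∧
      OrthogonalPP P {((2 : ℕ) : ZMod (2*k+1)), ((2*k : ℕ) : ZMod (2*k+1))}) :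
    ∃ P : Set (List (ZMod (2*k+1))), IsPathPartition A P ∧
      OrthogonalPP P {((0 : ℕ) : ZMod (2*k+1)), ((2*k : ℕ) : ZMod (2*k+1))} := by
  set c0 : ZMod (2*k+1) := ((0 : ℕ) : ZMod (2*k+1)) with hc0
  set c1 : ZMod (2*k+1) := ((1 : ℕ) : ZMod (2*k+1)) with hc1
  set c2 : ZMod (2*k+1) := ((2 : ℕ) : ZMod (2*k+1)) with hc2
  set c2k : ZMod (2*k+1) := ((2*k : ℕ) : ZMod (2*k+1)) with hc2k
  set W : Set (ZMod (2*k+1)) := {w : ZMod (2*k+1) | w ≠ c0 ∧ w ≠ c1} with hW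
  -- distinctness of casts of naturals below 2k+1
  have hne : ∀ a b : ℕ, a < 2*k+1 → b < 2*k+1 → a ≠ b →
      ((a : ℕ) : ZMod (2*k+1)) ≠ ((b : ℕ) : ZMod (2*k+1)) := by
    intro a b ha hb hab h
    have := (ZMod.natCast_eq_natCast_iff _ _ _).mp h
    rw [Nat.ModEq, Nat.mod_eq_of_lt ha, Nat.mod_eq_of_lt hb] at this
    exact hab this
  have h01 : c0 ≠ c1 := hne 0 1 (by omega) (by omega) (by omega)
  have h02 : c0 ≠ c2 := hne 0 2 (by omega) (by omega) (by omega)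
  have h02k : c0 ≠ c2k := hne 0 (2*k) (by omega) (by omega) (by omega)
  have h12 : c1 ≠ c2 := hne 1 2 (by omega) (by omega) (by omega)
  have h12k : c1 ≠ c2k := hne 1 (2*k) (by omega) (by omega) (by omega)
  have h22k : c2 ≠ c2k := hne 2 (2*k) (by omega) (by omega) (by omega)
  have hc0' : c0 = 0 := by simp [hc0]
  have hc1' : c1 = 1 := by simp [hc1]
  have hc2' : c2 = 2 := by simp [hc2]
  have h2kneg : c2k = -1 := by
    have hz : ((2*k+1 : ℕ) : ZMod (2*k+1)) = 0 := ZMod.natCast_self _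
    push_cast at hz
    rw [hc2k]
    push_cast
    linear_combination hz
  obtain ⟨P', ⟨hdip, hdisj, hcov⟩, horth⟩ := h
  have h2W : c2 ∈ W := ⟨h02.symm, h12.symm⟩
  have h2kW : c2k ∈ W := ⟨h02k.symm, h12k.symm⟩
  obtain ⟨p, hpP, hp2⟩ := hcov c2 h2W
  obtain ⟨q, hqP, hq2k⟩ := hcov c2k h2kW
  -- p contains exactly one of c2, c2k, namely c2; similarly for q
  obtain ⟨v, ⟨hvS, hvp⟩, hvu⟩ := horth p hpP
  have hv2 : v = c2 := (hvu c2 ⟨Or.inl rfl, hp2⟩).symm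
  have h2knp : c2k ∉ p := by
    intro hmem
    have := (hvu c2k ⟨Or.inr rfl, hmem⟩).symm
    exact h22k (hv2 ▸ this : c2 = c2k)
  obtain ⟨w', ⟨hwS, hwq⟩, hwu⟩ := horth q hqP
  have hw2k : w' = c2k := (hwu c2k ⟨Or.inr rfl, hq2k⟩).symm
  have h2nq : c2 ∉ q := by
    intro hmem
    have := (hwu c2 ⟨Or.inl rfl, hmem⟩).symm
    exact h22k (this ▸ hw2k)
  have hpq : p ≠ q := fun h => h2nq (h ▸ hp2)
  -- every path of P' is p or q
  have hall : ∀ r ∈ P', r = p ∨ r = q := by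
    intro r hr
    obtain ⟨u, ⟨huS, hur⟩, _⟩ := horth r hr
    rcases huS with h1 | h1
    · left
      by_contra hrp
      exact (hdisj r hr p hpP hrp u hur) (h1 ▸ hp2)
    · right
      by_contra hrq
      have h1' : u = c2k := h1
      exact (hdisj r hr q hqP hrq u hur) (h1' ▸ hq2k)
  -- structural facts about p and q
  obtain ⟨hpne, hpnd, hpW, hpch⟩ := hdip p hpP
  obtain ⟨hqne, hqnd, hqW, hqch⟩ := hdip q hqP
  have hpchA : p.Chain' A := hpch.imp (fun a b h => h.1)
  have hqchA : q.Chain' A := hqch.imp (fun a b h => h.1)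
  have h0np : c0 ∉ p := fun h => (hpW c0 h).1 rfl
  have h1nq : c1 ∉ q := fun h => (hqW c1 h).2 rfl
  have h0nq : c0 ∉ q := fun h => (hqW c0 h).1 rfl
  have h1np : c1 ∉ p := fun h => (hpW c1 h).2 rfl
  -- c0 is adjacent to every vertex of p
  have hadj0 : ∀ v ∈ p, A c0 v ∨ A v c0 := by
    intro v hv
    apply (hso c0 v).mpr
    refine ⟨fun h => (hpW v hv).1 h.symm, ?_, ?_⟩
    · rw [hc0', sub_zero]
      exact fun h => (hpW v hv).2 (h.trans hc1'.symm)
    · rw [hc0', zero_sub]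
      intro h
      have hv1 : v = c2k := by rw [h2kneg]; exact neg_eq_iff_eq_neg.mp h
      exact h2knp (hv1 ▸ hv)
  -- c1 is adjacent to every vertex of q
  have hadj1 : ∀ v ∈ q, A c1 v ∨ A v c1 := by
    intro v hv
    apply (hso c1 v).mpr
    refine ⟨fun h => (hqW v hv).2 h.symm, ?_, ?_⟩
    · rw [hc1']
      intro h
      have hv2' : v = c2 := by rw [hc2']; linear_combination h
      exact h2nq (hv2' ▸ hv)
    · rw [hc1']
      intro h
      have hv0 : v = c0 := by rw [hc0']; linear_combination -h
      exact (hqW v hv).1 hv0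
  obtain ⟨r0, hr0nd, hr0ch, hr0mem, -⟩ := insert_into_path A c0 p hpnd hpchA h0np hadj0
  obtain ⟨r1, hr1nd, hr1ch, hr1mem, -⟩ := insert_into_path A c1 q hqnd hqchA h1nq hadj1
  have h0r0 : c0 ∈ r0 := (hr0mem c0).mpr (Or.inl rfl)
  have h1r1 : c1 ∈ r1 := (hr1mem c1).mpr (Or.inl rfl)
  have h2knr0 : c2k ∉ r0 := by
    intro h
    rcases (hr0mem c2k).mp h with h1 | h1
    · exact h02k h1.symm
    · exact h2knp h1
  have h0nr1 : c0 ∉ r1 := by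
    intro h
    rcases (hr1mem c0).mp h with h1 | h1
    · exact h01 h1
    · exact h0nq h1
  have h2kr1 : c2k ∈ r1 := (hr1mem c2k).mpr (Or.inr hq2k)
  have hdisj01 : ∀ v : ZMod (2*k+1), v ∈ r0 → v ∉ r1 := by
    intro v hv0 hv1
    rcases (hr0mem v).mp hv0 with h1 | h1
    · exact h0nr1 (h1 ▸ hv1)
    · rcases (hr1mem v).mp hv1 with h2 | h2
      · exact h1np (h2 ▸ h1)
      · exact hdisj p hpP q hqP hpq v h1 h2
  have hr01 : r0 ≠ r1 := fun h => (hdisj01 c0 h0r0) (h ▸ h0r0)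
  refine ⟨{r0, r1}, ⟨?_, ?_, ?_⟩, ?_⟩
  · rintro r (rfl | rfl)
    · exact ⟨List.ne_nil_of_mem h0r0, hr0nd, hr0ch⟩
    · exact ⟨List.ne_nil_of_mem h1r1, hr1nd, hr1ch⟩
  · rintro r (rfl | rfl) s (rfl | rfl) hrs v hv
    · exact absurd rfl hrs
    · exact hdisj01 v hv
    · exact fun h => hdisj01 v h hv
    · exact absurd rfl hrs
  · intro v
    by_cases hv0 : v = c0
    · exact ⟨r0, Or.inl rfl, hv0 ▸ h0r0⟩
    by_cases hv1 : v = c1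
    · exact ⟨r1, Or.inr rfl, hv1 ▸ h1r1⟩
    obtain ⟨r, hrP, hvr⟩ := hcov v ⟨hv0, hv1⟩
    rcases hall r hrP with rfl | rfl
    · exact ⟨r0, Or.inl rfl, (hr0mem v).mpr (Or.inr hvr)⟩
    · exact ⟨r1, Or.inr rfl, (hr1mem v).mpr (Or.inr hvr)⟩
  · rintro r (rfl | rfl)
    · refine ⟨c0, ⟨Or.inl rfl, h0r0⟩, ?_⟩
      rintro y ⟨(hy | hy), hyr⟩
      · exact hy
      · exact absurd ((hy : y = c2k) ▸ hyr) h2knr0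
    · refine ⟨c2k, ⟨Or.inr rfl, h2kr1⟩, ?_⟩
      rintro y ⟨(hy | hy), hyr⟩
      · exact absurd ((hy : y = c0) ▸ hyr) h0nr1
      · exact hy
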